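/- Let $B$ be a commutative ring, $B' = B \otimes_{\mathbb{Z}} \mathbb{Q}$, and let $A' \to B'$ be a ring map of $\mathbb{Q}$-algebras which is a universal homeomorphism on spectra. Set $A = B \times_{B'} A'$. If $A' \to B'$ is surjective with locally nilpotent kernel, then $A \to B$ is surjective with locally nilpotent kernel; in particular $\operatorname{Spec} B \to \operatorname{Spec} A$ is a universal homeomorphism. -/

import Mathlib

open AlgebraicGeometry CategoryTheory

/-- A morphism of schemes is a universal homeomorphism if every base change of it is a
homeomorphism on underlying topological spaces. -/
def IsUniversalHomeomorphism : MorphismProperty Scheme :=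
  MorphismProperty.universally (topologically @IsHomeomorph)

/-- `Spec` of a surjective ring map with locally nilpotent kernel is a universal
homeomorphism: it is a surjective closed immersion, both properties are stable under
base change, and a surjective closed embedding is a homeomorphism. -/
lemma aux_univ_homeo {R S : CommRingCat} (f : R ⟶ S) (hs : Function.Surjective f)
    (hk : ∀ x ∈ RingHom.ker f.hom, IsNilpotent x) :
    IsUniversalHomeomorphism (Spec.map f) := by
  have hci : IsClosedImmersion (Spec.map f) := IsClosedImmersion.spec_of_surjective f hs
  have hsur : AlgebraicGeometry.Surjective (Spec.map f) := by
    constructor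
    rw [Spec.map_base, ← Set.range_eq_univ]
    have h1 := range_comap_of_surjective S f.hom hs
    refine h1.trans (Set.eq_univ_iff_forall.mpr fun p x hx => ?_)
    obtain ⟨n, hn⟩ := hk x hx
    exact p.2.mem_of_pow_mem n (hn ▸ p.asIdeal.zero_mem)
  have hP : (MorphismProperty.universally
      (@IsClosedImmersion ⊓ @AlgebraicGeometry.Surjective)) (Spec.map f) := by
    haveI := MorphismProperty.IsStableUnderBaseChange.inf (P := @IsClosedImmersion)
      (Q := @AlgebraicGeometry.Surjective)
    rw [MorphismProperty.IsStableUnderBaseChange.universally_eq]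
    exact ⟨hci, hsur⟩
  refine MorphismProperty.universally_mono ?_ _ hP
  intro X Y g hg
  rcases hg with ⟨hci', hsur'⟩
  exact isHomeomorph_iff_isEmbedding_surjective.mpr
    ⟨hci'.base_closed.isEmbedding, hsur'.surj⟩

/-- Let `B` be a commutative ring, `B' = B ⊗ ℚ` (realized as the localization of `B` at
the nonzero integers), and `A' → B'` a surjective ring map of `ℚ`-algebras with locally
nilpotent kernel (a universal homeomorphism on spectra). Let `A = B ×_{B'} A'` be the
fiber product. Then `A → B` is surjective with locally nilpotent kernel; in particular
`Spec B → Spec A` is a universal homeomorphism. -/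
theorem stmt_14 {B B' A' : Type} [CommRing B] [CommRing B'] [CommRing A']
    [Algebra ℚ B'] [Algebra ℚ A'] [Algebra B B']
    [IsLocalization ((nonZeroDivisors ℤ).map (Int.castRingHom B).toMonoidHom) B']
    (π' : A' →+* B') (hsurj : Function.Surjective π')
    (hker : ∀ x ∈ RingHom.ker π', IsNilpotent x) :
    Function.Surjective
      ((RingHom.fst B A').comp
        (RingHom.eqLocus ((algebraMap B B').comp (RingHom.fst B A'))
          (π'.comp (RingHom.snd B A'))).subtype) ∧
    (∀ x ∈ RingHom.ker ((RingHom.fst B A').comp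
        (RingHom.eqLocus ((algebraMap B B').comp (RingHom.fst B A'))
          (π'.comp (RingHom.snd B A'))).subtype), IsNilpotent x) ∧
    IsUniversalHomeomorphism
      (Spec.map (CommRingCat.ofHom
        ((RingHom.fst B A').comp
          (RingHom.eqLocus ((algebraMap B B').comp (RingHom.fst B A'))
            (π'.comp (RingHom.snd B A'))).subtype))) := by
  have hs : Function.Surjective
      ((RingHom.fst B A').comp
        (RingHom.eqLocus ((algebraMap B B').comp (RingHom.fst B A'))
          (π'.comp (RingHom.snd B A'))).subtype) := by
    intro b
    obtain ⟨a', ha'⟩ := hsurj (algebraMap B B' b)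
    exact ⟨⟨(b, a'), ha'.symm⟩, rfl⟩
  have hk : ∀ x ∈ RingHom.ker ((RingHom.fst B A').comp
      (RingHom.eqLocus ((algebraMap B B').comp (RingHom.fst B A'))
        (π'.comp (RingHom.snd B A'))).subtype), IsNilpotent x := by
    intro x hx
    have h1 : (x : B × A').1 = 0 := hx
    have h2 : π' (x : B × A').2 = 0 := by
      have hx2 : algebraMap B B' (x : B × A').1 = π' (x : B × A').2 := x.2
      rw [← hx2, h1, map_zero]
    obtain ⟨n, hn⟩ := hker _ h2
    refine ⟨n + 1, Subtype.ext ?_⟩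
    show ((x : B × A') ^ (n + 1)) = 0
    refine Prod.ext ?_ ?_
    · show (x : B × A').1 ^ (n + 1) = 0
      rw [pow_succ, h1, mul_zero]
    · show (x : B × A').2 ^ (n + 1) = 0
      rw [pow_succ, hn, zero_mul]
  exact ⟨hs, hk, aux_univ_homeo _ hs hk⟩
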